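/- Let ψ be a Poisson random variable with mean Λ > 0 and let k > 0. Then P( Λ ≤ ψ + k²/2 + √(k²ψ + k⁴/4) ) ≥ 1 − 1/(1 + k²). -/

import Mathlib

open MeasureTheory ProbabilityTheory
open scoped NNReal ENNReal

lemma hasSum_exp_div (Λ : ℝ) :
    HasSum (fun n : ℕ => Λ ^ n / n.factorial) (Real.exp Λ) := by
  rw [Real.exp_eq_exp_ℝ]
  exact NormedSpace.expSeries_div_hasSum_exp Λ

lemma hasSum_mul_exp_div (Λ : ℝ) :
    HasSum (fun n : ℕ => (n : ℝ) * (Λ ^ n / n.factorial)) (Λ * Real.exp Λ) := by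
  have h1 : HasSum (fun n : ℕ => ((n + 1 : ℕ) : ℝ) * (Λ ^ (n + 1) / (n + 1).factorial))
      (Λ * Real.exp Λ) := by
    have h := (hasSum_exp_div Λ).mul_left Λ
    convert! h using 1
    ext n
    rw [Nat.factorial_succ]
    push_cast
    have hn : ((n : ℝ) + 1) ≠ 0 := by positivity
    field_simp
    ring
  have h2 := (hasSum_nat_add_iff (f := fun n : ℕ => (n : ℝ) * (Λ ^ n / n.factorial)) 1).mp h1
  simpa using h2

lemma hasSum_sq_sub_mul_exp_div (Λ : ℝ) :
    HasSum (fun n : ℕ => ((n : ℝ) ^ 2 - n) * (Λ ^ n / n.factorial)) (Λ ^ 2 * Real.exp Λ) := by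
  have h1 : HasSum (fun n : ℕ => (((n + 2 : ℕ) : ℝ) ^ 2 - ((n + 2 : ℕ) : ℝ)) *
      (Λ ^ (n + 2) / (n + 2).factorial)) (Λ ^ 2 * Real.exp Λ) := by
    have h := (hasSum_exp_div Λ).mul_left (Λ ^ 2)
    convert! h using 1
    ext n
    rw [Nat.factorial_succ, Nat.factorial_succ]
    push_cast
    have hn1 : ((n : ℝ) + 1) ≠ 0 := by positivity
    have hn2 : ((n : ℝ) + 1 + 1) ≠ 0 := by positivity
    field_simp
    ring
  have h2 := (hasSum_nat_add_iff
      (f := fun n : ℕ => ((n : ℝ) ^ 2 - n) * (Λ ^ n / n.factorial)) 2).mp h1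
  have : (∑ i ∈ Finset.range 2, ((i : ℝ) ^ 2 - i) * (Λ ^ i / i.factorial)) = 0 := by
    simp [Finset.sum_range_succ]
  rw [this, add_zero] at h2
  exact h2

/-- One-sided Chebyshev bound for a Poisson random variable `ψ` with mean `Λ > 0`:
`P( Λ ≤ ψ + k²/2 + √(k²ψ + k⁴/4) ) ≥ 1 − 1/(1 + k²)`. -/
theorem poisson_mean_upper_confidence (Λ : ℝ) (hΛ : 0 < Λ) (k : ℝ) (hk : 0 < k) :
    ENNReal.ofReal (1 - 1 / (1 + k ^ 2)) ≤
      poissonMeasure Λ.toNNReal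
        {n : ℕ | Λ ≤ (n : ℝ) + k ^ 2 / 2 + Real.sqrt (k ^ 2 * n + k ^ 4 / 4)} := by
  classical
  set S : Set ℕ := {n : ℕ | Λ ≤ (n : ℝ) + k ^ 2 / 2 + Real.sqrt (k ^ 2 * n + k ^ 4 / 4)} with hS
  set p : ℕ → ℝ := fun n => Real.exp (-Λ) * (Λ ^ n / n.factorial) with hpdef
  have hcoe : ((Λ.toNNReal : ℝ≥0) : ℝ) = Λ := Real.coe_toNNReal Λ hΛ.le
  have hp_nonneg : ∀ n, 0 ≤ p n := by
    intro n
    have : (0:ℝ) ≤ Λ ^ n / n.factorial := by positivity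
    positivity
  have hpmf : ∀ n, poissonPMFReal Λ.toNNReal n = p n := by
    intro n
    rw [poissonPMFReal, hcoe, mul_div_assoc]
  -- moments
  have hp0 : HasSum p 1 := by
    have := (hasSum_exp_div Λ).mul_left (Real.exp (-Λ))
    rwa [← Real.exp_add, neg_add_cancel, Real.exp_zero] at this
  have hp1 : HasSum (fun n : ℕ => (n : ℝ) * p n) Λ := by
    have := (hasSum_mul_exp_div Λ).mul_left (Real.exp (-Λ))
    have he : Real.exp (-Λ) * (Λ * Real.exp Λ) = Λ := by
      rw [mul_comm Λ (Real.exp Λ), ← mul_assoc, ← Real.exp_add, neg_add_cancel, Real.exp_zero,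
        one_mul]
    rw [he] at this
    have hfn : (fun n : ℕ => (n : ℝ) * p n) =
        fun n : ℕ => Real.exp (-Λ) * ((n : ℝ) * (Λ ^ n / n.factorial)) := by
      ext n; simp only [hpdef]; ring
    rw [hfn]
    exact this
  have hp2 : HasSum (fun n : ℕ => (n : ℝ) ^ 2 * p n) (Λ ^ 2 + Λ) := by
    have h := ((hasSum_sq_sub_mul_exp_div Λ).add (hasSum_mul_exp_div Λ)).mul_left
      (Real.exp (-Λ))
    have he : Real.exp (-Λ) * (Λ ^ 2 * Real.exp Λ + Λ * Real.exp Λ) = Λ ^ 2 + Λ := by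
      rw [← add_mul, mul_comm, mul_assoc, ← Real.exp_add, add_neg_cancel, Real.exp_zero, mul_one]
    rw [he] at h
    have hfn : (fun n : ℕ => (n : ℝ) ^ 2 * p n) = fun n : ℕ =>
        Real.exp (-Λ) * (((n : ℝ) ^ 2 - n) * (Λ ^ n / n.factorial) +
          (n : ℝ) * (Λ ^ n / n.factorial)) := by
      ext n; simp only [hpdef]; ring
    rw [hfn]
    exact h
  -- Cantelli setup
  set s : ℝ := Real.sqrt Λ with hsdef
  have hs_pos : 0 < s := Real.sqrt_pos.mpr hΛ
  have hs_sq : s ^ 2 = Λ := Real.sq_sqrt hΛ.le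
  set u : ℝ := s / k with hudef
  set t : ℝ := k * s + s / k with htdef
  have ht_pos : 0 < t := by positivity
  -- second moment of (Λ + u - n)
  have hE : HasSum (fun n : ℕ => (Λ + u - n) ^ 2 * p n) (Λ + u ^ 2) := by
    have h := ((hp0.mul_left ((Λ + u) ^ 2)).sub (hp1.mul_left (2 * (Λ + u)))).add hp2
    have hfn : (fun n : ℕ => (Λ + u - n) ^ 2 * p n) =
        fun n : ℕ => ((Λ + u) ^ 2 * p n - 2 * (Λ + u) * ((n : ℝ) * p n)) + (n : ℝ) ^ 2 * p n := by
      ext n; ring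
    have hv : Λ + u ^ 2 = ((Λ + u) ^ 2 * 1 - 2 * (Λ + u) * Λ) + (Λ ^ 2 + Λ) := by ring
    rw [hfn, hv]
    exact h
  have hRHS : HasSum (fun n : ℕ => (Λ + u - n) ^ 2 / t ^ 2 * p n) ((Λ + u ^ 2) / t ^ 2) := by
    have h := hE.div_const (t ^ 2)
    have hfn : (fun n : ℕ => (Λ + u - n) ^ 2 / t ^ 2 * p n) =
        fun n : ℕ => (Λ + u - n) ^ 2 * p n / t ^ 2 := by
      ext n; ring
    rw [hfn]
    exact h
  have hval : (Λ + u ^ 2) / t ^ 2 = 1 / (1 + k ^ 2) := by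
    have hk0 : k ≠ 0 := ne_of_gt hk
    have hΛs : Λ = s ^ 2 := hs_sq.symm
    rw [div_eq_div_iff (by positivity) (by positivity), hΛs]
    simp only [hudef, htdef]
    field_simp
    ring
  -- pointwise bound on the complement
  have hpt : ∀ n : ℕ, Sᶜ.indicator p n ≤ (Λ + u - n) ^ 2 / t ^ 2 * p n := by
    intro n
    by_cases hn : n ∈ Sᶜ
    · rw [Set.indicator_of_mem hn]
      have hn' : ¬ (Λ ≤ (n : ℝ) + k ^ 2 / 2 + Real.sqrt (k ^ 2 * n + k ^ 4 / 4)) := hn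
      -- show (n : ℝ) + k * s < Λ
      have hlt : (n : ℝ) + k * s < Λ := by
        by_contra hcon
        push_neg at hcon
        apply hn'
        -- from Λ ≤ n + k * s deduce the event
        rcases le_or_gt (Λ - n) (k ^ 2 / 2) with h1 | h1
        · have h2 : (0:ℝ) ≤ Real.sqrt (k ^ 2 * n + k ^ 4 / 4) := Real.sqrt_nonneg _
          linarith
        · have h3 : 0 ≤ Λ - (n : ℝ) := by nlinarith
          have h4 : Λ - (n : ℝ) ≤ k * s := by linarith
          have h5 : (Λ - (n : ℝ)) ^ 2 ≤ k ^ 2 * Λ := by nlinarith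
          have h6 : Λ - (n : ℝ) - k ^ 2 / 2 ≤ Real.sqrt (k ^ 2 * n + k ^ 4 / 4) := by
            rw [Real.le_sqrt (by linarith) (by positivity)]
            nlinarith
          linarith
      have hge : t ≤ Λ + u - n := by
        simp only [htdef, hudef]
        linarith
      have h1 : t ^ 2 ≤ (Λ + u - n) ^ 2 := by nlinarith
      have h2 : (1:ℝ) ≤ (Λ + u - n) ^ 2 / t ^ 2 := (one_le_div (by positivity)).mpr h1
      calc p n = 1 * p n := (one_mul _).symm
        _ ≤ (Λ + u - n) ^ 2 / t ^ 2 * p n :=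
          mul_le_mul_of_nonneg_right h2 (hp_nonneg n)
    · rw [Set.indicator_of_notMem hn]
      have hnn : (0:ℝ) ≤ (Λ + u - n) ^ 2 / t ^ 2 * p n := by
        have := hp_nonneg n
        positivity
      exact hnn
  -- sum bound on complement
  have hind_nonneg : ∀ n, 0 ≤ Sᶜ.indicator p n := fun n =>
    Set.indicator_nonneg (fun m _ => hp_nonneg m) n
  have hind_summable : Summable (Sᶜ.indicator p) :=
    Summable.of_nonneg_of_le hind_nonneg hpt hRHS.summable
  have hsum_le : (∑' n, Sᶜ.indicator p n) ≤ 1 / (1 + k ^ 2) := by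
    calc (∑' n, Sᶜ.indicator p n) ≤ ∑' n, (Λ + u - n) ^ 2 / t ^ 2 * p n :=
          Summable.tsum_le_tsum hpt hind_summable hRHS.summable
      _ = (Λ + u ^ 2) / t ^ 2 := hRHS.tsum_eq
      _ = 1 / (1 + k ^ 2) := hval
  -- translate to measure
  have hmeasS : MeasurableSet S := MeasurableSet.of_discrete
  have hcompl : poissonMeasure Λ.toNNReal Sᶜ = ENNReal.ofReal (∑' n, Sᶜ.indicator p n) := by
    rw [poissonMeasure, Measure.sum_apply _ hmeasS.compl,
      ENNReal.ofReal_tsum_of_nonneg hind_nonneg hind_summable]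
    refine tsum_congr fun n => ?_
    by_cases hn : n ∈ Sᶜ
    · rw [Set.indicator_of_mem hn, Measure.smul_apply, Measure.dirac_apply_of_mem hn, smul_eq_mul,
        mul_one, hcoe, mul_div_assoc]
    · rw [Set.indicator_of_notMem hn, Measure.smul_apply, Measure.dirac_apply' _ hmeasS.compl,
        Set.indicator_of_notMem hn, smul_eq_mul, mul_zero, ENNReal.ofReal_zero]
  have hcompl_le : poissonMeasure Λ.toNNReal Sᶜ ≤ ENNReal.ofReal (1 / (1 + k ^ 2)) := by
    rw [hcompl]
    exact ENNReal.ofReal_le_ofReal hsum_le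
  have hSapply : poissonMeasure Λ.toNNReal S = 1 - poissonMeasure Λ.toNNReal Sᶜ := by
    have h := prob_compl_eq_one_sub (μ := poissonMeasure Λ.toNNReal) hmeasS.compl
    rwa [compl_compl] at h
  rw [hSapply]
  have h1 : ENNReal.ofReal (1 - 1 / (1 + k ^ 2)) =
      1 - ENNReal.ofReal (1 / (1 + k ^ 2)) := by
    rw [← ENNReal.ofReal_one, ← ENNReal.ofReal_sub _ (by positivity)]
  rw [h1]
  exact tsub_le_tsub_left hcompl_le 1
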